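/- Lower bound of Proposition 6.1: let (A_n)_n be the realization of model A started from the all-ones configuration 1^ℤ (A_0 = 1^ℤ, A_{n+1} = 𝒜(A_n,U_n) with i.i.d. uniform updates). Then for every n ≥ 1, P(A_{0,n}A_{1,n} ∈ {00,11}) = d_{n−1}/2, where d_n = 4^{−n} C(2n+1,n). Equivalently, for model B started from the fully occupied configuration •^ℤ, P(B_{0,n} = •) = d_{n−1}/2 for n ≥ 1. -/

import Mathlib

open MeasureTheory ProbabilityTheory

/-!
Conventions: a configuration of model A is `x : ℤ → Bool` (`false` = 0, `true` = 1);
a configuration of model B is `y : ℤ → Bool` (`false` = ∘, `true` = •);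
an update is `u : ℤ → Bool` (`true` = ↑, `false` = →).
-/

/-- The local map `𝒜` of model A. -/
def modelA (x u : ℤ → Bool) : ℤ → Bool := fun i =>
  if x (i - 1) = x i then xor (x i) (u i) else x (i - 1)

/-- The local map `ℬ` of model B: the `i`-th coordinate of `ℬ(y,u)` is `•` iff
`(y_{i-1}y_i, u_{i-1}u_i) ∈ {(•∘, →⋅), (∘•, ⋅↑), (••, ↑↑), (••, →→)}`. -/
def modelB (y u : ℤ → Bool) : ℤ → Bool := fun i =>
  match y (i - 1), y i with
  | true, false => !u (i - 1)
  | false, true => u i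
  | true, true => u (i - 1) == u i
  | false, false => false

/-- step of the backward walk: `true` (↑) keeps position, `false` (→) moves down by 1. -/
def stepv (b : Bool) : ℤ := bif b then 0 else -1

lemma stepv_le (b : Bool) : stepv b ≤ 0 := by cases b <;> simp [stepv]
lemma stepv_ge (b : Bool) : -1 ≤ stepv b := by cases b <;> simp [stepv]

/-- backward walk started at `g` at level `n`, after `s` steps (reading levels `n-1, …, n-s`). -/
def Wk (u : ℤ × ℕ → Bool) (g : ℤ) (n : ℕ) : ℕ → ℤ
  | 0 => g
  | s + 1 => Wk u g n s + stepv (u (Wk u g n s - 1, n - (s + 1)))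

lemma Wk_le (u g n) : ∀ s, Wk u g n s ≤ g := by
  intro s; induction s with
  | zero => simp [Wk]
  | succ s ih => have := stepv_le (u (Wk u g n s - 1, n - (s + 1))); simp only [Wk]; omega

lemma Wk_ge (u g n) : ∀ s, g - s ≤ Wk u g n s := by
  intro s; induction s with
  | zero => simp [Wk]
  | succ s ih =>
      have := stepv_ge (u (Wk u g n s - 1, n - (s + 1)))
      simp only [Wk]; push_cast; omega

lemma Wk_mono (u n) {g g' : ℤ} (h : g ≤ g') : ∀ s, Wk u g n s ≤ Wk u g' n s := by
  intro s; induction s with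
  | zero => simpa [Wk]
  | succ s ih =>
      rcases eq_or_lt_of_le ih with heq | hlt
      · simp only [Wk, heq]; exact le_refl _
      · have h1 := stepv_le (u (Wk u g n s - 1, n - (s + 1)))
        have h2 := stepv_ge (u (Wk u g' n s - 1, n - (s + 1)))
        simp only [Wk]; omega

lemma Wk_eq_next (u n) {g g' : ℤ} {s : ℕ} (h : Wk u g n s = Wk u g' n s) :
    Wk u g n (s + 1) = Wk u g' n (s + 1) := by simp only [Wk, h]

lemma Wk_congr {u u' : ℤ × ℕ → Bool} (g : ℤ) (n : ℕ) :
    ∀ s, s ≤ n → (∀ i ℓ, g - s ≤ i → i < g → n - s ≤ ℓ → ℓ < n → u (i, ℓ) = u' (i, ℓ)) →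
    Wk u g n s = Wk u' g n s := by
  intro s; induction s with
  | zero => intros; simp [Wk]
  | succ s ih =>
      intro hs h
      have hih : Wk u g n s = Wk u' g n s := by
        refine ih (by omega) (fun i ℓ h1 h2 h3 h4 => h i ℓ (by push_cast; push_cast at h1; omega) h2 (by omega) h4)
      have hp1 : g - s ≤ Wk u g n s := Wk_ge u g n s
      have hp2 : Wk u g n s ≤ g := Wk_le u g n s
      have hc : u (Wk u g n s - 1, n - (s + 1)) = u' (Wk u g n s - 1, n - (s + 1)) := by
        refine h _ _ (by push_cast; omega) (by omega) (by omega) (by omega)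
      simp only [Wk, hih] at hc ⊢
      rw [hc]

lemma Wk_peel (u : ℤ × ℕ → Bool) (g : ℤ) (m : ℕ) :
    ∀ s, Wk u g (m + 1) (s + 1) = Wk u (g + stepv (u (g - 1, m))) m s := by
  intro s; induction s with
  | zero => simp [Wk]
  | succ s ih =>
      have hlev : m + 1 - (s + 1 + 1) = m - (s + 1) := by omega
      simp only [Wk] at ih ⊢
      rw [hlev] at *
      rw [ih]

/-- the number of initial (fully occupied) sites whose forward trajectory ends at site `i`
at time `m`; model B's occupancy is the parity of this count. -/
def cnt (u : ℤ × ℕ → Bool) : ℕ → ℤ → ℕ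
  | 0, _ => 1
  | m + 1, i => (bif u (i - 1, m) then 0 else cnt u m (i - 1)) + (bif u (i, m) then cnt u m i else 0)

lemma cnt_eq_gap (u : ℤ × ℕ → Bool) : ∀ (m : ℕ) (i : ℤ),
    (cnt u m i : ℤ) = Wk u (i + 1) m m - Wk u i m m := by
  intro m; induction m with
  | zero => intro i; simp [cnt, Wk]
  | succ m ih =>
      intro i
      have hA := Wk_peel u (i + 1) m m
      have hB := Wk_peel u i m m
      have e1 : i + 1 - 1 = i := by ring
      rw [e1] at hA
      cases hb : u (i - 1, m) <;> cases hc : u (i, m) <;>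
        simp only [cnt, hb, hc, cond_true, cond_false, hA, hB, stepv] <;> push_cast
      · -- u(i-1,m)=ff, u(i,m)=ff : gap = W(i) - W(i-1) = cnt m (i-1)
        have := ih (i - 1)
        have e2 : i - 1 + 1 = i := by ring
        rw [e2] at this
        rw [show i + 1 + -1 = i by ring, show i + -1 = i - 1 by ring]
        omega
      · -- ff, tt : gap = W(i+1) - W(i-1) = cnt m (i-1) + cnt m i
        have h1 := ih (i - 1)
        have h2 := ih i
        have e2 : i - 1 + 1 = i := by ring
        rw [e2] at h1
        rw [show i + 1 + 0 = i + 1 by ring, show i + -1 = i - 1 by ring]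
        omega
      · -- tt, ff : 0
        rw [show i + 1 + -1 = i by ring, show i + 0 = i by ring]
        omega
      · -- tt, tt : cnt m i
        have := ih i
        rw [show i + 1 + 0 = i + 1 by ring, show i + 0 = i by ring]
        omega

/-- iteration of model B from the fully occupied configuration. -/
def itY (u : ℤ × ℕ → Bool) : ℕ → ℤ → Bool
  | 0, _ => true
  | m + 1, i => modelB (itY u m) (fun j => u (j, m)) i

lemma itY_parity (u : ℤ × ℕ → Bool) : ∀ (m : ℕ) (i : ℤ),
    itY u m i = decide (cnt u m i % 2 = 1) := by
  intro m; induction m with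
  | zero => intro i; simp [itY, cnt]
  | succ m ih =>
      intro i
      show modelB (itY u m) (fun j => u (j, m)) i = _
      rw [modelB]
      simp only [ih]
      rcases Nat.mod_two_eq_zero_or_one (cnt u m (i - 1)) with h1 | h1 <;>
        rcases Nat.mod_two_eq_zero_or_one (cnt u m i) with h2 | h2 <;>
          cases hb : u (i - 1, m) <;> cases hc : u (i, m) <;>
            simp [cnt, hb, hc, Nat.add_mod, h1, h2]

lemma modelA_pair (x u : ℤ → Bool) (i : ℤ) :
    (modelA x u (i - 1) == modelA x u i) = modelB (fun j => x (j - 1) == x j) u i := by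
  have h2 : i - 1 - 1 = i - 2 := by ring
  cases ha : x (i - 2) <;> cases hb : x (i - 1) <;> cases hc : x i <;>
    cases hp : u (i - 1) <;> cases hq : u i <;>
      simp [modelA, modelB, h2, ha, hb, hc, hp, hq]


section Prob
variable {Ω : Type*} [MeasurableSpace Ω] {P : Measure Ω} [IsProbabilityMeasure P]
variable {X : ℤ × ℕ → Ω → Bool}

/-- a boolean functional depends only on coordinates in `S`. -/
def DepOn (F : (ℤ × ℕ → Bool) → Bool) (S : Finset (ℤ × ℕ)) : Prop :=
  ∀ v w, (∀ p ∈ S, v p = w p) → F v = F w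

def cylEvent (X : ℤ × ℕ → Ω → Bool) (F : (ℤ × ℕ → Bool) → Bool) : Set Ω :=
  {ω | F (fun p => X p ω) = true}

def extendS (S : Finset (ℤ × ℕ)) (w : {p // p ∈ S} → Bool) : ℤ × ℕ → Bool :=
  fun p => if h : p ∈ S then w ⟨p, h⟩ else false

lemma cyl_repr {F : (ℤ × ℕ → Bool) → Bool} {S : Finset (ℤ × ℕ)} (hF : DepOn F S)
    (X : ℤ × ℕ → Ω → Bool) :
    cylEvent X F = (fun ω (p : {p // p ∈ S}) => X p.1 ω) ⁻¹'
      {w : {p // p ∈ S} → Bool | F (extendS S w) = true} := by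
  ext ω
  simp only [cylEvent, Set.mem_setOf_eq, Set.mem_preimage]
  constructor
  · intro h
    rw [← h]
    exact (hF _ _ (fun p hp => by simp [extendS, hp])).symm
  · intro h
    rw [← h]
    exact hF _ _ (fun p hp => by simp [extendS, hp])

lemma allMeasSet {S : Finset (ℤ × ℕ)} (A : Set ({p // p ∈ S} → Bool)) : MeasurableSet A :=
  A.to_countable.measurableSet

lemma meas_tuple (hmeas : ∀ p, Measurable (X p)) (S : Finset (ℤ × ℕ)) :
    Measurable (fun ω (p : {p // p ∈ S}) => X p.1 ω) :=
  measurable_pi_lambda _ (fun p => hmeas p.1)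

lemma meas_cyl (hmeas : ∀ p, Measurable (X p)) {F : (ℤ × ℕ → Bool) → Bool}
    {S : Finset (ℤ × ℕ)} (hF : DepOn F S) : MeasurableSet (cylEvent X F) := by
  rw [cyl_repr hF]
  exact meas_tuple hmeas S (allMeasSet _)

lemma indep_cyl (hmeas : ∀ p, Measurable (X p))
    (hindep : iIndepFun X P)
    {F G : (ℤ × ℕ → Bool) → Bool} {S T : Finset (ℤ × ℕ)}
    (hF : DepOn F S) (hG : DepOn G T) (hST : Disjoint S T) :
    P (cylEvent X F ∩ cylEvent X G) = P (cylEvent X F) * P (cylEvent X G) := by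
  have h := hindep.indepFun_finset S T hST hmeas
  rw [indepFun_iff_measure_inter_preimage_eq_mul] at h
  rw [cyl_repr hF, cyl_repr hG]
  exact h _ _ (allMeasSet _) (allMeasSet _)

lemma prob_coin (hmeas : ∀ p, Measurable (X p))
    (hunif : ∀ p, P {ω | X p ω = true} = 1 / 2) (p : ℤ × ℕ) (ε : Bool) :
    P {ω | X p ω = ε} = 1 / 2 := by
  cases ε
  · have hset : {ω | X p ω = false} = {ω | X p ω = true}ᶜ := by
      ext ω; simp
    have hm : MeasurableSet {ω | X p ω = true} := by
      have : {ω | X p ω = true} = X p ⁻¹' {true} := rfl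
      rw [this]; exact hmeas p (measurableSet_singleton _)
    rw [hset, measure_compl hm (measure_ne_top _ _), hunif p, measure_univ]
    rw [one_div, ENNReal.one_sub_inv_two]
  · exact hunif p

lemma prob_coin_pair (hmeas : ∀ p, Measurable (X p))
    (hindep : iIndepFun X P)
    (hunif : ∀ p, P {ω | X p ω = true} = 1 / 2)
    {p q : ℤ × ℕ} (hpq : p ≠ q) (ε δ : Bool) :
    P ({ω | X p ω = ε} ∩ {ω | X q ω = δ}) = 1 / 4 := by
  have h := (hindep.indepFun hpq).measure_inter_preimage_eq_mul
    {ε} {δ} (measurableSet_singleton _) (measurableSet_singleton _)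
  have e1 : X p ⁻¹' {ε} = {ω | X p ω = ε} := rfl
  have e2 : X q ⁻¹' {δ} = {ω | X q ω = δ} := rfl
  rw [e1, e2] at h
  rw [h, prob_coin hmeas hunif, prob_coin hmeas hunif]
  rw [one_div, one_div, ← ENNReal.mul_inv (by norm_num) (by norm_num)]
  norm_num

end Prob
section Chain
variable {Ω : Type*} [MeasurableSpace Ω] {P : Measure Ω} [IsProbabilityMeasure P]
variable {X : ℤ × ℕ → Ω → Bool}

/-- box of coins used by the two walks from `g` and `g+1`, over `s` steps below level `n`. -/
noncomputable def Sbox (g : ℤ) (n s : ℕ) : Finset (ℤ × ℕ) :=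
  Finset.Icc (g - (s : ℤ)) g ×ˢ Finset.Ico (n - s) n

def lgSet (X : ℤ × ℕ → Ω → Bool) (g : ℤ) (n s : ℕ) (a x : ℤ) : Set Ω :=
  {ω | Wk (fun p => X p ω) g n s = a ∧
    Wk (fun p => X p ω) (g + 1) n s - Wk (fun p => X p ω) g n s = x}

def gapSet (X : ℤ × ℕ → Ω → Bool) (g : ℤ) (n s : ℕ) (x : ℤ) : Set Ω :=
  {ω | Wk (fun p => X p ω) (g + 1) n s - Wk (fun p => X p ω) g n s = x}

lemma depOn_lg {g : ℤ} {n s : ℕ} (hs : s ≤ n) (a x : ℤ) :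
    DepOn (fun v => decide (Wk v g n s = a ∧ Wk v (g + 1) n s - Wk v g n s = x))
      (Sbox g n s) := by
  intro v w hvw
  have h1 : Wk v g n s = Wk w g n s := by
    refine Wk_congr g n s hs (fun i ℓ h1 h2 h3 h4 => hvw (i, ℓ) ?_)
    simp only [Sbox, Finset.mem_product, Finset.mem_Icc, Finset.mem_Ico]
    exact ⟨⟨h1, le_of_lt h2⟩, h3, h4⟩
  have h2 : Wk v (g + 1) n s = Wk w (g + 1) n s := by
    refine Wk_congr (g + 1) n s hs (fun i ℓ h1 h2 h3 h4 => hvw (i, ℓ) ?_)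
    simp only [Sbox, Finset.mem_product, Finset.mem_Icc, Finset.mem_Ico]
    refine ⟨⟨by omega, by omega⟩, h3, h4⟩
  simp only [h1, h2]

lemma depOn_gap {g : ℤ} {n s : ℕ} (hs : s ≤ n) (x : ℤ) :
    DepOn (fun v => decide (Wk v (g + 1) n s - Wk v g n s = x)) (Sbox g n s) := by
  intro v w hvw
  have h1 : Wk v g n s = Wk w g n s := by
    refine Wk_congr g n s hs (fun i ℓ h1 h2 h3 h4 => hvw (i, ℓ) ?_)
    simp only [Sbox, Finset.mem_product, Finset.mem_Icc, Finset.mem_Ico]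
    exact ⟨⟨h1, le_of_lt h2⟩, h3, h4⟩
  have h2 : Wk v (g + 1) n s = Wk w (g + 1) n s := by
    refine Wk_congr (g + 1) n s hs (fun i ℓ h1 h2 h3 h4 => hvw (i, ℓ) ?_)
    simp only [Sbox, Finset.mem_product, Finset.mem_Icc, Finset.mem_Ico]
    refine ⟨⟨by omega, by omega⟩, h3, h4⟩
  simp only [h1, h2]

lemma lgSet_cyl (X : ℤ × ℕ → Ω → Bool) (g : ℤ) (n s : ℕ) (a x : ℤ) :
    lgSet X g n s a x =
      cylEvent X (fun v => decide (Wk v g n s = a ∧ Wk v (g + 1) n s - Wk v g n s = x)) := by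
  ext ω; simp [lgSet, cylEvent]

lemma gapSet_cyl (X : ℤ × ℕ → Ω → Bool) (g : ℤ) (n s : ℕ) (x : ℤ) :
    gapSet X g n s x =
      cylEvent X (fun v => decide (Wk v (g + 1) n s - Wk v g n s = x)) := by
  ext ω; simp [gapSet, cylEvent]

lemma meas_lgSet (hmeas : ∀ p, Measurable (X p)) {g : ℤ} {n s : ℕ} (hs : s ≤ n) (a x : ℤ) :
    MeasurableSet (lgSet X g n s a x) := by
  rw [lgSet_cyl]; exact meas_cyl hmeas (depOn_lg hs a x)

lemma meas_gapSet (hmeas : ∀ p, Measurable (X p)) {g : ℤ} {n s : ℕ} (hs : s ≤ n) (x : ℤ) :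
    MeasurableSet (gapSet X g n s x) := by
  rw [gapSet_cyl]; exact meas_cyl hmeas (depOn_gap hs x)

/-- decomposition of a gap event over the position of the left walk. -/
lemma gap_decomp (hmeas : ∀ p, Measurable (X p)) {g : ℤ} {n s : ℕ} (hs : s ≤ n) (x : ℤ) :
    P (gapSet X g n s x) = ∑ a ∈ Finset.Icc (g - (s : ℤ)) g, P (lgSet X g n s a x) := by
  have hun : gapSet X g n s x = ⋃ a ∈ Finset.Icc (g - (s : ℤ)) g, lgSet X g n s a x := by
    ext ω
    simp only [gapSet, lgSet, Set.mem_setOf_eq, Set.mem_iUnion, Finset.mem_Icc]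
    constructor
    · intro h
      exact ⟨Wk (fun p => X p ω) g n s, ⟨Wk_ge _ g n s, Wk_le _ g n s⟩, rfl, h⟩
    · rintro ⟨a, _, _, h⟩; exact h
  rw [hun, measure_biUnion_finset ?_ (fun a _ => meas_lgSet hmeas hs a x)]
  intro a _ b _ hab
  simp only [Function.onFun]
  rw [Set.disjoint_left]
  rintro ω ⟨ha, -⟩ ⟨hb, -⟩
  exact hab (ha ▸ hb ▸ rfl)

end Chain
section Step
variable {Ω : Type*} [MeasurableSpace Ω] {P : Measure Ω} [IsProbabilityMeasure P]
variable {X : ℤ × ℕ → Ω → Bool}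

lemma step_decomp (hmeas : ∀ p, Measurable (X p))
    (hindep : iIndepFun X P)
    (hunif : ∀ p, P {ω | X p ω = true} = 1 / 2)
    {g : ℤ} {n s : ℕ} (hs : s + 1 ≤ n) (y : ℕ) :
    P (gapSet X g n (s + 1) ((y : ℤ) + 1)) =
      (2 * P (gapSet X g n s ((y : ℤ) + 1)) + P (gapSet X g n s ((y : ℤ) + 2)) +
        (if 1 ≤ y then P (gapSet X g n s (y : ℤ)) else 0)) * (1 / 4) := by
  classical
  set A : Finset ℤ := Finset.Icc (g - (s : ℤ)) g with hA
  set B : Finset ℤ := Finset.Icc (1 : ℤ) ((y : ℤ) + 2) with hB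
  set K : Finset ((ℤ × ℤ) × (Bool × Bool)) :=
    ((A ×ˢ B) ×ˢ (Finset.univ : Finset (Bool × Bool))).filter
      (fun q => q.1.2 = (y : ℤ) + 1 + stepv q.2.1 - stepv q.2.2) with hK
  set pc : (ℤ × ℤ) × (Bool × Bool) → Set Ω := fun q =>
    lgSet X g n s q.1.1 q.1.2 ∩
      ({ω | X (q.1.1 - 1, n - (s + 1)) ω = q.2.1} ∩
       {ω | X (q.1.1 + q.1.2 - 1, n - (s + 1)) ω = q.2.2}) with hpc
  -- event decomposition
  have hE : gapSet X g n (s + 1) ((y : ℤ) + 1) = ⋃ q ∈ K, pc q := by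
    ext ω
    simp only [Set.mem_iUnion]
    set u : ℤ × ℕ → Bool := fun p => X p ω with hu
    have hstepL : Wk u g n (s + 1) = Wk u g n s + stepv (u (Wk u g n s - 1, n - (s + 1))) := rfl
    have hstepR : Wk u (g + 1) n (s + 1) =
        Wk u (g + 1) n s + stepv (u (Wk u (g + 1) n s - 1, n - (s + 1))) := rfl
    constructor
    · intro h
      have h' : Wk u (g + 1) n (s + 1) - Wk u g n (s + 1) = (y : ℤ) + 1 := h
      rw [hstepL, hstepR] at h'
      have hmono : Wk u g n s ≤ Wk u (g + 1) n s := Wk_mono u n (by omega) s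
      have hne : Wk u g n s ≠ Wk u (g + 1) n s := by
        intro heq
        have h2 := Wk_eq_next u n heq
        rw [hstepL, hstepR] at h2
        omega
      have hb1 := stepv_le (u (Wk u g n s - 1, n - (s + 1)))
      have hb2 := stepv_ge (u (Wk u g n s - 1, n - (s + 1)))
      have hb3 := stepv_le (u (Wk u (g + 1) n s - 1, n - (s + 1)))
      have hb4 := stepv_ge (u (Wk u (g + 1) n s - 1, n - (s + 1)))
      have hgeL := Wk_ge u g n s
      have hleL := Wk_le u g n s
      refine ⟨((Wk u g n s, Wk u (g + 1) n s - Wk u g n s),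
        (u (Wk u g n s - 1, n - (s + 1)), u (Wk u (g + 1) n s - 1, n - (s + 1)))), ?_, ?_⟩
      · simp only [hK, Finset.mem_filter, Finset.mem_product, Finset.mem_univ, and_true,
          hA, hB, Finset.mem_Icc]
        refine ⟨⟨⟨hgeL, hleL⟩, by omega, by omega⟩, by omega⟩
      · simp only [hpc, lgSet, Set.mem_inter_iff, Set.mem_setOf_eq]
        refine ⟨⟨rfl, rfl⟩, rfl, ?_⟩
        rw [show Wk u g n s + (Wk u (g + 1) n s - Wk u g n s) - 1
          = Wk u (g + 1) n s - 1 by ring]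
        try rfl
        try trivial
    · rintro ⟨⟨⟨a, x⟩, ⟨e1, e2⟩⟩, hqK, hqpc⟩
      simp only [hK, Finset.mem_filter, Finset.mem_product, Finset.mem_univ, and_true,
        hA, hB, Finset.mem_Icc] at hqK
      simp only [hpc, lgSet, Set.mem_inter_iff, Set.mem_setOf_eq] at hqpc
      obtain ⟨⟨hwl0, hgap0⟩, hc1, hc2⟩ := hqpc
      obtain ⟨-, hcond⟩ := hqK
      have hwl : Wk u g n s = a := hwl0
      have hgap : Wk u (g + 1) n s - Wk u g n s = x := hgap0
      have hwr : Wk u (g + 1) n s = a + x := by omega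
      have hcc1 : u (Wk u g n s - 1, n - (s + 1)) = e1 := by rw [hwl]; exact hc1
      have hcc2 : u (Wk u (g + 1) n s - 1, n - (s + 1)) = e2 := by rw [hwr]; exact hc2
      show Wk u (g + 1) n (s + 1) - Wk u g n (s + 1) = (y : ℤ) + 1
      rw [hstepL, hstepR, hcc1, hcc2]
      omega
  -- pieces are measurable
  have hmp : ∀ q ∈ K, MeasurableSet (pc q) := by
    intro q _
    refine (meas_lgSet hmeas (by omega) _ _).inter (MeasurableSet.inter ?_ ?_)
    · exact hmeas _ (by exact measurableSet_singleton _ : MeasurableSet {q.2.1})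
    · exact hmeas _ (by exact measurableSet_singleton _ : MeasurableSet {q.2.2})
  -- pieces are pairwise disjoint
  have hdisj : Set.PairwiseDisjoint (K : Set ((ℤ × ℤ) × (Bool × Bool))) pc := by
    rintro q - q' - hne
    simp only [Function.onFun]
    rw [Set.disjoint_left]
    rintro ω ⟨⟨h1, h2⟩, h3, h4⟩ ⟨⟨h1', h2'⟩, h3', h4'⟩
    apply hne
    have e11 : q.1.1 = q'.1.1 := by rw [← h1, ← h1']
    have e12 : q.1.2 = q'.1.2 := by rw [← h2, ← h2']
    have e21 : q.2.1 = q'.2.1 := by rw [← h3, ← h3', e11]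
    have e22 : q.2.2 = q'.2.2 := by rw [← h4, ← h4', e11, e12]
    exact Prod.ext (Prod.ext e11 e12) (Prod.ext e21 e22)
  -- probability of a piece factorizes
  have hPp : ∀ q ∈ K, P (pc q) = P (lgSet X g n s q.1.1 q.1.2) * (1 / 4) := by
    rintro ⟨⟨a, x⟩, ⟨e1, e2⟩⟩ hq
    simp only [hK, Finset.mem_filter, Finset.mem_product, hA, hB, Finset.mem_Icc] at hq
    have hx1 : 1 ≤ x := hq.1.1.2.1
    have hcells : (a - 1, n - (s + 1)) ≠ (a + x - 1, n - (s + 1)) := by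
      intro hcc
      rw [Prod.ext_iff] at hcc
      omega
    have hcp : {ω | X (a - 1, n - (s + 1)) ω = e1} ∩ {ω | X (a + x - 1, n - (s + 1)) ω = e2} =
        cylEvent X (fun v => (v (a - 1, n - (s + 1)) == e1) && (v (a + x - 1, n - (s + 1)) == e2)) := by
      ext ω; simp [cylEvent]
    have hdep2 : DepOn (fun v => (v (a - 1, n - (s + 1)) == e1) && (v (a + x - 1, n - (s + 1)) == e2))
        ({(a - 1, n - (s + 1)), (a + x - 1, n - (s + 1))} : Finset (ℤ × ℕ)) := by
      intro v w hvw
      dsimp only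
      rw [hvw _ (by simp), hvw _ (by simp)]
    have hdisjbox : Disjoint (Sbox g n s)
        ({(a - 1, n - (s + 1)), (a + x - 1, n - (s + 1))} : Finset (ℤ × ℕ)) := by
      rw [Finset.disjoint_left]
      rintro ⟨i, l⟩ hp hq2
      simp only [Sbox, Finset.mem_product, Finset.mem_Icc, Finset.mem_Ico] at hp
      simp only [Finset.mem_insert, Finset.mem_singleton, Prod.ext_iff] at hq2
      omega
    show P (lgSet X g n s a x ∩ _) = _
    rw [hcp, lgSet_cyl]
    rw [indep_cyl hmeas hindep (depOn_lg (by omega) a x) hdep2 hdisjbox]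
    rw [← lgSet_cyl, ← hcp]
    rw [prob_coin_pair hmeas hindep hunif hcells e1 e2]
  -- sum over pieces
  rw [hE, measure_biUnion_finset hdisj hmp, Finset.sum_congr rfl hPp, ← Finset.sum_mul]
  congr 1
  -- now the combinatorial sum
  rw [hK, Finset.sum_filter, Finset.sum_product, Finset.sum_product]
  have haux : ∀ a ∈ A,
      (∑ x ∈ B, ∑ e ∈ (Finset.univ : Finset (Bool × Bool)),
        if x = (y : ℤ) + 1 + stepv e.1 - stepv e.2 then P (lgSet X g n s a x) else 0) =
      2 * P (lgSet X g n s a ((y : ℤ) + 1)) + P (lgSet X g n s a ((y : ℤ) + 2)) +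
        (if 1 ≤ y then P (lgSet X g n s a (y : ℤ)) else 0) := by
    intro a _
    rw [Finset.sum_comm]
    rw [Fintype.sum_prod_type]
    rw [Fintype.sum_bool]
    rw [Fintype.sum_bool, Fintype.sum_bool]
    rw [show stepv (true, true).1 = 0 from rfl, show stepv (true, false).2 = -1 from rfl]
    rw [Finset.sum_ite_eq' B ((y : ℤ) + 1 + 0 - 0), Finset.sum_ite_eq' B ((y : ℤ) + 1 + 0 - (-1)),
      Finset.sum_ite_eq' B ((y : ℤ) + 1 + (-1) - 0), Finset.sum_ite_eq' B ((y : ℤ) + 1 + (-1) - (-1))]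
    have m1 : ((y : ℤ) + 1 + 0 - 0) ∈ B := by simp only [hB, Finset.mem_Icc]; omega
    have m2 : ((y : ℤ) + 1 + 0 - (-1)) ∈ B := by simp only [hB, Finset.mem_Icc]; omega
    have m4 : ((y : ℤ) + 1 + (-1) - (-1)) ∈ B := by simp only [hB, Finset.mem_Icc]; omega
    rw [if_pos m1, if_pos m2, if_pos m4]
    rw [show (y : ℤ) + 1 + 0 - 0 = (y : ℤ) + 1 by ring, show (y : ℤ) + 1 + 0 - (-1) = (y : ℤ) + 2 by ring,
      show (y : ℤ) + 1 + (-1) - (-1) = (y : ℤ) + 1 by ring, show (y : ℤ) + 1 + (-1) - 0 = (y : ℤ) by ring]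
    by_cases hy : 1 ≤ y
    · have m3 : ((y : ℤ)) ∈ B := by simp only [hB, Finset.mem_Icc]; omega
      rw [if_pos m3, if_pos hy]
      ring
    · have m3 : ((y : ℤ)) ∉ B := by simp only [hB, Finset.mem_Icc]; omega
      rw [if_neg m3, if_neg hy]
      ring
  rw [Finset.sum_congr rfl haux]
  rw [Finset.sum_add_distrib, Finset.sum_add_distrib, ← Finset.mul_sum]
  rw [← gap_decomp hmeas (by omega) ((y : ℤ) + 1), ← gap_decomp hmeas (by omega) ((y : ℤ) + 2)]
  by_cases hy : 1 ≤ y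
  · simp only [if_pos hy]
    rw [← gap_decomp hmeas (by omega) ((y : ℤ))]
  · simp only [if_neg hy, Finset.sum_const_zero]

end Step
section Law
variable {Ω : Type*} [MeasurableSpace Ω] {P : Measure Ω} [IsProbabilityMeasure P]
variable {X : ℤ × ℕ → Ω → Bool}

lemma pascal2 (a b : ℕ) :
    (a + 2).choose (b + 2) = a.choose b + 2 * a.choose (b + 1) + a.choose (b + 2) := by
  rw [show a + 2 = (a + 1) + 1 from rfl, Nat.choose_succ_succ (a + 1) (b + 1),
    Nat.choose_succ_succ a b, Nat.choose_succ_succ a (b + 1)]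
  ring

lemma central_succ (s : ℕ) :
    (2 * s + 2).choose (s + 1) = 2 * ((2 * s).choose s + (2 * s).choose (s + 1)) := by
  have e1 : (2 * s + 2).choose (s + 1) = (2 * s + 1).choose s + (2 * s + 1).choose (s + 1) :=
    Nat.choose_succ_succ (2 * s + 1) s
  have e2 : (2 * s + 1).choose s = (2 * s + 1).choose (s + 1) := by
    rw [← Nat.choose_symm (by omega : s + 1 ≤ 2 * s + 1)]
    congr 1
    omega
  have e3 : (2 * s + 1).choose (s + 1) = (2 * s).choose s + (2 * s).choose (s + 1) :=
    Nat.choose_succ_succ (2 * s) s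
  omega

lemma chain_law (hmeas : ∀ p, Measurable (X p))
    (hindep : iIndepFun X P)
    (hunif : ∀ p, P {ω | X p ω = true} = 1 / 2)
    (n : ℕ) (g : ℤ) :
    ∀ s, s ≤ n → ∀ y : ℕ,
      P (gapSet X g n s ((y : ℤ) + 1)) * 4 ^ s + ((2 * s).choose (s + y + 2) : ENNReal) =
        ((2 * s).choose (s + y) : ENNReal) := by
  intro s
  induction s with
  | zero =>
      intro _ y
      rcases y with _ | y'
      · have h1 : gapSet X g n 0 (((0 : ℕ) : ℤ) + 1) = Set.univ := by
          ext ω; simp [gapSet, Wk]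
        rw [h1, measure_univ]
        norm_num
      · have h1 : gapSet X g n 0 (((y' + 1 : ℕ) : ℤ) + 1) = ∅ := by
          ext ω
          simp only [gapSet, Wk, Set.mem_setOf_eq, Set.mem_empty_iff_false, iff_false]
          push_cast
          omega
        rw [h1, measure_empty, zero_mul, zero_add]
        rw [Nat.choose_eq_zero_of_lt (by omega), Nat.choose_eq_zero_of_lt (by omega)]
  | succ s ih =>
      intro hs1 y
      have h14 : (1 / 4 : ENNReal) * 4 ^ (s + 1) = 4 ^ s := by
        rw [pow_succ', one_div, ← mul_assoc, ENNReal.inv_mul_cancel (by norm_num) (by norm_num),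
          one_mul]
      rw [step_decomp hmeas hindep hunif hs1 y, mul_assoc, h14]
      -- nat-subtraction representation from the inductive hypothesis
      have hle : ∀ z : ℕ, (2 * s).choose (s + z + 2) ≤ (2 * s).choose (s + z) := by
        intro z
        have h := ih (by omega) z
        have : ((2 * s).choose (s + z + 2) : ENNReal) ≤ ((2 * s).choose (s + z) : ENNReal) :=
          h ▸ le_add_self
        exact_mod_cast this
      have hQ : ∀ z : ℕ, P (gapSet X g n s ((z : ℤ) + 1)) * 4 ^ s =
          (((2 * s).choose (s + z) - (2 * s).choose (s + z + 2) : ℕ) : ENNReal) := by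
        intro z
        have h := ih (by omega) z
        rw [ENNReal.natCast_sub]
        exact ENNReal.eq_sub_of_add_eq (ENNReal.natCast_ne_top _) h
      rcases y with _ | w
      · -- y = 0
        rw [if_neg (by omega)]
        rw [add_zero, add_mul, mul_assoc, hQ 0]
        rw [show ((0 : ℕ) : ℤ) + 2 = ((1 : ℕ) : ℤ) + 1 by push_cast <;> ring, hQ 1]
        have p1 := central_succ s
        have p3 := pascal2 (2 * s) (s + 1)
        have l0 := hle 0
        have l1 := hle 1
        have key : 2 * ((2 * s).choose (s + 0) - (2 * s).choose (s + 0 + 2)) +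
            ((2 * s).choose (s + 1) - (2 * s).choose (s + 1 + 2)) +
            (2 * (s + 1)).choose (s + 1 + 0 + 2) = (2 * (s + 1)).choose (s + 1 + 0) := by
          have c1 : (2 * s).choose (s + 0) = (2 * s).choose s := by
            rw [show s + 0 = s by ring]
          have c2 : (2 * s).choose (s + 0 + 2) = (2 * s).choose (s + 2) := by
            rw [show s + 0 + 2 = s + 2 by ring]
          have c3 : (2 * s).choose (s + 1 + 2) = (2 * s).choose (s + 3) := by
            rw [show s + 1 + 2 = s + 3 by ring]
          have c4 : (2 * (s + 1)).choose (s + 1 + 0 + 2) = (2 * s + 2).choose (s + 3) := by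
            rw [show 2 * (s + 1) = 2 * s + 2 by ring, show s + 1 + 0 + 2 = s + 3 by ring]
          have c5 : (2 * (s + 1)).choose (s + 1 + 0) = (2 * s + 2).choose (s + 1) := by
            rw [show 2 * (s + 1) = 2 * s + 2 by ring, show s + 1 + 0 = s + 1 by ring]
          have c6 : (2 * s + 2).choose (s + 1 + 2) = (2 * s + 2).choose (s + 3) := by
            rw [show s + 1 + 2 = s + 3 by ring]
          have c7 : (2 * s).choose (s + 1 + 1) = (2 * s).choose (s + 2) := by
            rw [show s + 1 + 1 = s + 2 by ring]
          omega
        exact_mod_cast key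
      · -- y = w + 1
        rw [if_pos (by omega)]
        rw [add_mul, add_mul, mul_assoc, hQ (w + 1)]
        rw [show ((w + 1 : ℕ) : ℤ) + 2 = ((w + 2 : ℕ) : ℤ) + 1 by push_cast <;> ring, hQ (w + 2)]
        rw [show ((w + 1 : ℕ) : ℤ) = ((w : ℕ) : ℤ) + 1 by push_cast <;> ring, hQ w]
        have p1 := pascal2 (2 * s) (s + w)
        have p3 := pascal2 (2 * s) (s + w + 2)
        have l0 := hle w
        have l1 := hle (w + 1)
        have l2 := hle (w + 2)
        have key : 2 * ((2 * s).choose (s + (w + 1)) - (2 * s).choose (s + (w + 1) + 2)) +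
            ((2 * s).choose (s + (w + 2)) - (2 * s).choose (s + (w + 2) + 2)) +
            ((2 * s).choose (s + w) - (2 * s).choose (s + w + 2)) +
            (2 * (s + 1)).choose (s + 1 + (w + 1) + 2) =
            (2 * (s + 1)).choose (s + 1 + (w + 1)) := by
          have b1 : (2 * s).choose (s + (w + 1)) = (2 * s).choose (s + w + 1) := by
            rw [show s + (w + 1) = s + w + 1 by ring]
          have b2 : (2 * s).choose (s + (w + 1) + 2) = (2 * s).choose (s + w + 3) := by
            rw [show s + (w + 1) + 2 = s + w + 3 by ring]
          have b3 : (2 * s).choose (s + (w + 2)) = (2 * s).choose (s + w + 2) := by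
            rw [show s + (w + 2) = s + w + 2 by ring]
          have b4 : (2 * s).choose (s + (w + 2) + 2) = (2 * s).choose (s + w + 4) := by
            rw [show s + (w + 2) + 2 = s + w + 4 by ring]
          have b5 : (2 * (s + 1)).choose (s + 1 + (w + 1) + 2) = (2 * s + 2).choose (s + w + 4) := by
            rw [show 2 * (s + 1) = 2 * s + 2 by ring, show s + 1 + (w + 1) + 2 = s + w + 4 by ring]
          have b6 : (2 * (s + 1)).choose (s + 1 + (w + 1)) = (2 * s + 2).choose (s + w + 2) := by
            rw [show 2 * (s + 1) = 2 * s + 2 by ring, show s + 1 + (w + 1) = s + w + 2 by ring]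
          have b7 : (2 * s + 2).choose (s + w + 2 + 2) = (2 * s + 2).choose (s + w + 4) := by
            rw [show s + w + 2 + 2 = s + w + 4 by ring]
          have b8 : (2 * s).choose (s + w + 2 + 1) = (2 * s).choose (s + w + 3) := by
            rw [show s + w + 2 + 1 = s + w + 3 by ring]
          have b9 : (2 * s).choose (s + w + 2 + 2) = (2 * s).choose (s + w + 4) := by
            rw [show s + w + 2 + 2 = s + w + 4 by ring]
          omega
        exact_mod_cast key

end Law
section Fin
variable {Ω : Type*} [MeasurableSpace Ω] {P : Measure Ω} [IsProbabilityMeasure P]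
variable {X : ℤ × ℕ → Ω → Bool}

lemma telescope (hmeas : ∀ p, Measurable (X p))
    (hindep : iIndepFun X P)
    (hunif : ∀ p, P {ω | X p ω = true} = 1 / 2)
    (n : ℕ) (g : ℤ) :
    ∀ T : ℕ,
      (∑ t ∈ Finset.range T, P (gapSet X g n n (((2 * t : ℕ) : ℤ) + 1))) * 4 ^ n +
        ((2 * n).choose (n + 2 * T) : ENNReal) = ((2 * n).choose n : ENNReal) := by
  intro T
  induction T with
  | zero => simp
  | succ T ih =>
      rw [Finset.sum_range_succ, add_mul]
      have hcl := chain_law hmeas hindep hunif n g n le_rfl (2 * T)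
      have e1 : n + 2 * (T + 1) = n + 2 * T + 2 := by ring
      rw [e1, add_assoc, hcl]
      exact ih

lemma final_prob (hmeas : ∀ p, Measurable (X p))
    (hindep : iIndepFun X P)
    (hunif : ∀ p, P {ω | X p ω = true} = 1 / 2)
    (n : ℕ) (i : ℤ) :
    P {ω | cnt (fun p => X p ω) n i % 2 = 1} * 4 ^ n = ((2 * n).choose n : ENNReal) := by
  have hset : {ω | cnt (fun p => X p ω) n i % 2 = 1} =
      ⋃ t ∈ Finset.range (n + 1), gapSet X i n n (((2 * t : ℕ) : ℤ) + 1) := by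
    ext ω
    simp only [Set.mem_setOf_eq, Set.mem_iUnion, Finset.mem_range, gapSet]
    have hc := cnt_eq_gap (fun p => X p ω) n i
    have hub : Wk (fun p => X p ω) (i + 1) n n ≤ i + 1 := Wk_le _ _ _ _
    have hlb : i - (n : ℤ) ≤ Wk (fun p => X p ω) i n n := Wk_ge _ _ _ _
    constructor
    · intro h
      refine ⟨cnt (fun p => X p ω) n i / 2, by omega, ?_⟩
      rw [← hc]
      push_cast
      omega
    · rintro ⟨t, ht, hgap⟩
      rw [← hc] at hgap
      have : cnt (fun p => X p ω) n i = 2 * t + 1 := by exact_mod_cast hgap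
      omega
  rw [hset, measure_biUnion_finset ?_ (fun t _ => meas_gapSet hmeas le_rfl _)]
  · have htel := telescope hmeas hindep hunif n i (n + 1)
    rw [Nat.choose_eq_zero_of_lt (by omega)] at htel
    simpa using htel
  · rintro t - t' - hne
    simp only [Function.onFun]
    rw [Set.disjoint_left]
    rintro ω h1 h2
    apply hne
    simp only [gapSet, Set.mem_setOf_eq] at h1 h2
    have : ((2 * t : ℕ) : ℤ) = ((2 * t' : ℕ) : ℤ) := by omega
    have : 2 * t = 2 * t' := by exact_mod_cast this
    omega

lemma final_arith (p : ENNReal) (m : ℕ)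
    (h : p * 4 ^ (m + 1) = ((2 * (m + 1)).choose (m + 1) : ENNReal)) :
    p = ((2 * m + 1).choose m : ENNReal) / (2 * 4 ^ m) := by
  have hc : (2 * (m + 1)).choose (m + 1) = 2 * ((2 * m + 1).choose m) := by
    have e1 : 2 * (m + 1) = (2 * m + 1) + 1 := by ring
    rw [e1, Nat.choose_succ_succ (2 * m + 1) m]
    have e2 : (2 * m + 1).choose (m + 1) = (2 * m + 1).choose m := by
      rw [← Nat.choose_symm (by omega : m + 1 ≤ 2 * m + 1)]
      congr 1
      omega
    have e3 : (2 * m + 1).choose m.succ = (2 * m + 1).choose (m + 1) := rfl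
    omega
  rw [hc] at h
  have hp : p = (2 * ((2 * m + 1).choose m) : ENNReal) / 4 ^ (m + 1) := by
    rw [ENNReal.eq_div_iff (by positivity) (ENNReal.pow_ne_top (by norm_num))]
    rw [mul_comm, h]
    push_cast
    ring
  rw [hp]
  rw [show (4 : ENNReal) ^ (m + 1) = 2 * (2 * 4 ^ m) by rw [pow_succ]; ring]
  rw [ENNReal.mul_div_mul_left _ _ (by norm_num) (by norm_num)]

end Fin

/-- lower bound of Proposition 6.1: for the realization of model A
started from the all-ones configuration `1^ℤ` (with i.i.d. uniform updates), for every
`n ≥ 1`, `P(A_{0,n} A_{1,n} ∈ {00,11}) = d_{n-1}/2` where `d_m = 4^{-m} C(2m+1,m)`;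
equivalently, for model B started from the fully occupied configuration `•^ℤ`,
`P(B_{0,n} = •) = d_{n-1}/2` for `n ≥ 1`. -/
theorem modelA_modelB_full_start {Ω : Type*} [MeasurableSpace Ω] (P : Measure Ω)
    [IsProbabilityMeasure P]
    -- the realization of model A started from 1^ℤ
    (U : ℤ × ℕ → Ω → Bool) (hUmeas : ∀ p, Measurable (U p))
    (hUindep : iIndepFun U P)
    (hUunif : ∀ p, P {ω | U p ω = true} = 1 / 2)
    (A : ℕ → Ω → ℤ → Bool) (hA0 : ∀ ω, A 0 ω = fun _ => true)
    (hA : ∀ n ω, A (n + 1) ω = modelA (A n ω) (fun i => U (i, n) ω))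
    -- the realization of model B started from •^ℤ
    (V : ℤ × ℕ → Ω → Bool) (hVmeas : ∀ p, Measurable (V p))
    (hVindep : iIndepFun V P)
    (hVunif : ∀ p, P {ω | V p ω = true} = 1 / 2)
    (Y : ℕ → Ω → ℤ → Bool) (hY0 : ∀ ω, Y 0 ω = fun _ => true)
    (hY : ∀ n ω, Y (n + 1) ω = modelB (Y n ω) (fun i => V (i, n) ω))
    (n : ℕ) (hn : 1 ≤ n) :
    P {ω | A n ω 0 = A n ω 1} =
      (Nat.choose (2 * (n - 1) + 1) (n - 1) : ENNReal) / (2 * 4 ^ (n - 1)) ∧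
    P {ω | Y n ω 0 = true} =
      (Nat.choose (2 * (n - 1) + 1) (n - 1) : ENNReal) / (2 * 4 ^ (n - 1)) := by
  -- model A's pair process follows model B
  have hZ : ∀ (m : ℕ) (ω : Ω) (i : ℤ), (A m ω (i - 1) == A m ω i) = itY (fun p => U p ω) m i := by
    intro m
    induction m with
    | zero => intro ω i; rw [hA0]; rfl
    | succ m ih =>
        intro ω i
        rw [hA m ω, modelA_pair]
        have he : (fun j => A m ω (j - 1) == A m ω j) = itY (fun p => U p ω) m :=
          funext (fun j => ih ω j)
        rw [he]
        rfl
  have hYit : ∀ (m : ℕ) (ω : Ω), Y m ω = itY (fun p => V p ω) m := by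
    intro m
    induction m with
    | zero => intro ω; rw [hY0]; rfl
    | succ m ih => intro ω; rw [hY m ω, ih ω]; rfl
  -- rewrite the two events as parity-of-count events
  have hsetA : {ω | A n ω 0 = A n ω 1} = {ω | cnt (fun p => U p ω) n 1 % 2 = 1} := by
    ext ω
    simp only [Set.mem_setOf_eq]
    have h := hZ n ω 1
    rw [show (1 : ℤ) - 1 = 0 by ring] at h
    rw [itY_parity] at h
    constructor
    · intro hval
      have : (A n ω 0 == A n ω 1) = true := by rw [hval]; simp
      rw [h] at this
      simpa using this
    · intro hval
      have : (A n ω 0 == A n ω 1) = true := by rw [h]; simpa using hval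
      simpa using this
  have hsetY : {ω | Y n ω 0 = true} = {ω | cnt (fun p => V p ω) n 0 % 2 = 1} := by
    ext ω
    simp only [Set.mem_setOf_eq]
    rw [hYit n ω, itY_parity]
    simp
  obtain ⟨m, rfl⟩ : ∃ m, n = m + 1 := ⟨n - 1, by omega⟩
  have e1 : m + 1 - 1 = m := rfl
  rw [hsetA, hsetY, e1]
  constructor
  · exact final_arith _ m (final_prob hUmeas hUindep hUunif (m + 1) 1)
  · exact final_arith _ m (final_prob hVmeas hVindep hVunif (m + 1) 0)
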